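/- The set E6' = (√(5/8)·S_even × {-√3/2}) ∪ (D5 × {0}) ∪ (√(5/8)·S_odd × {√3/2}) of 72 points in ℝ^6 is a kissing configuration: every point has squared norm 2 and any two distinct points have inner product at most 1. -/

import Mathlib

/-- The D5 root system: vectors in ℝ^5 with exactly two nonzero coordinates, each ±1. -/
def D5 : Set (Fin 5 → ℝ) :=
  {v | (∀ i, v i = -1 ∨ v i = 0 ∨ v i = 1) ∧
    (Finset.univ.filter fun i => v i ≠ 0).card = 2}

/-- The 16 vectors with all coordinates `±√(2/5)` and an even number of minus signs. -/
def Seven : Set (Fin 5 → ℝ) :=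
  {v | (∀ i, v i = Real.sqrt (2/5) ∨ v i = -Real.sqrt (2/5)) ∧
    Even (Finset.univ.filter fun i => v i = -Real.sqrt (2/5)).card}

/-- The 16 vectors with all coordinates `±√(2/5)` and an odd number of minus signs. -/
def Sodd : Set (Fin 5 → ℝ) :=
  {v | (∀ i, v i = Real.sqrt (2/5) ∨ v i = -Real.sqrt (2/5)) ∧
    Odd (Finset.univ.filter fun i => v i = -Real.sqrt (2/5)).card}

/-- Append a sixth coordinate `h` to `c • t` for `t` in a set `T ⊆ ℝ^5`. -/
def layer (c : ℝ) (T : Set (Fin 5 → ℝ)) (h : ℝ) : Set (Fin 6 → ℝ) :=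
  (fun t => Fin.snoc (fun i => c * t i) h) '' T

/-- The E6 kissing configuration built from a `D5` cross section and two layers of holes. -/
noncomputable def E6' : Set (Fin 6 → ℝ) :=
  layer (Real.sqrt (5/8)) Seven (-(Real.sqrt 3 / 2)) ∪
  layer 1 D5 0 ∪
  layer (Real.sqrt (5/8)) Sodd (Real.sqrt 3 / 2)

namespace E6Aux

open Finset

def sz (b : Bool) : ℤ := if b then -1 else 1
def ez (k : Fin 3) : ℤ := if k = 0 then -1 else if k = 1 then 0 else 1

noncomputable def sVal (b : Bool) : ℝ := ((sz b : ℤ) : ℝ) * Real.sqrt (2/5)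
noncomputable def eV (k : Fin 3) : ℝ := ((ez k : ℤ) : ℝ)

set_option maxRecDepth 1000000

lemma keyEE : ∀ b b' : Fin 5 → Bool,
    Even ((univ.filter fun i => b i = true).card) →
    Even ((univ.filter fun i => b' i = true).card) →
    b ≠ b' → (∑ i, sz (b i) * sz (b' i)) ≤ 1 := by decide

lemma keyOO : ∀ b b' : Fin 5 → Bool,
    Odd ((univ.filter fun i => b i = true).card) →
    Odd ((univ.filter fun i => b' i = true).card) →
    b ≠ b' → (∑ i, sz (b i) * sz (b' i)) ≤ 1 := by decide

lemma keySS : ∀ b b' : Fin 5 → Bool, (∑ i, sz (b i) * sz (b' i)) ≤ 5 := by decide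

lemma keyED : ∀ b : Fin 5 → Bool, ∀ a : Fin 5 → Fin 3,
    ((univ.filter fun i => a i ≠ 1).card = 2) → (∑ i, sz (b i) * ez (a i)) ≤ 2 := by decide

lemma keyDnorm : ∀ a : Fin 5 → Fin 3,
    ((univ.filter fun i => a i ≠ 1).card = 2) → (∑ i, ez (a i) * ez (a i)) = 2 := by decide

set_option maxHeartbeats 4000000 in
lemma keyDD : ∀ a a' : Fin 5 → Fin 3,
    ((univ.filter fun i => a i ≠ 1).card = 2) →
    ((univ.filter fun i => a' i ≠ 1).card = 2) →
    a ≠ a' → (∑ i, ez (a i) * ez (a' i)) ≤ 1 := by decide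

lemma cardE : (univ.filter fun b : Fin 5 → Bool =>
    Even ((univ.filter fun i => b i = true).card)).card = 16 := by decide
lemma cardO : (univ.filter fun b : Fin 5 → Bool =>
    Odd ((univ.filter fun i => b i = true).card)).card = 16 := by decide
lemma cardD : (univ.filter fun a : Fin 5 → Fin 3 =>
    (univ.filter fun i => a i ≠ 1).card = 2).card = 40 := by decide

lemma rpos : 0 < Real.sqrt (2/5) := Real.sqrt_pos.mpr (by norm_num)
lemma cpos : 0 < Real.sqrt (5/8) := Real.sqrt_pos.mpr (by norm_num)
lemma s3pos : 0 < Real.sqrt 3 := Real.sqrt_pos.mpr (by norm_num)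
lemma hr : Real.sqrt (2/5) * Real.sqrt (2/5) = 2/5 := Real.mul_self_sqrt (by norm_num)
lemma hc : Real.sqrt (5/8) * Real.sqrt (5/8) = 5/8 := Real.mul_self_sqrt (by norm_num)
lemma h3 : Real.sqrt 3 * Real.sqrt 3 = 3 := Real.mul_self_sqrt (by norm_num)
lemma hcr : Real.sqrt (5/8) * Real.sqrt (2/5) = 1/2 := by
  rw [← Real.sqrt_mul (by norm_num)]
  rw [show (5/8 : ℝ) * (2/5) = (1/2)^2 by norm_num, Real.sqrt_sq (by norm_num)]

lemma rne : Real.sqrt (2/5) ≠ -Real.sqrt (2/5) := by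
  have := rpos; intro h; linarith

lemma sValT : sVal true = -Real.sqrt (2/5) := by
  rw [sVal, show sz true = -1 from rfl]; push_cast; ring
lemma sValF : sVal false = Real.sqrt (2/5) := by
  rw [sVal, show sz false = 1 from rfl]; push_cast; ring
lemma eV0 : eV 0 = -1 := by rw [eV, show ez 0 = -1 from by decide]; push_cast; ring
lemma eV1 : eV 1 = 0 := by rw [eV, show ez 1 = 0 from by decide]; push_cast; ring
lemma eV2 : eV 2 = 1 := by rw [eV, show ez 2 = 1 from by decide]; push_cast; ring

lemma k3 : ∀ k : Fin 3, k = 0 ∨ k = 1 ∨ k = 2 := by decide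

lemma sVal_inj : Function.Injective sVal := by
  intro b b' h
  cases b <;> cases b'
  · rfl
  · rw [sValF, sValT] at h; exact absurd h rne
  · rw [sValT, sValF] at h; exact absurd h.symm rne
  · rfl

lemma eV_inj : Function.Injective eV := by
  intro k k' h
  rcases k3 k with hk | hk | hk <;> rcases k3 k' with hk' | hk' | hk' <;>
    subst hk <;> subst hk' <;> first
      | rfl
      | (simp only [eV0, eV1, eV2] at h; norm_num at h)

lemma seven_iff (t : Fin 5 → ℝ) : t ∈ Seven ↔ ∃ b : Fin 5 → Bool,
    Even ((univ.filter fun i => b i = true).card) ∧ t = fun i => sVal (b i) := by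
  constructor
  · rintro ⟨h1, h2⟩
    refine ⟨fun i => decide (t i = -Real.sqrt (2/5)), ?_, ?_⟩
    · have : (univ.filter fun i => decide (t i = -Real.sqrt (2/5)) = true) =
          (univ.filter fun i => t i = -Real.sqrt (2/5)) := by
        apply Finset.filter_congr; intro i _
        exact decide_eq_true_iff
      rw [this]; exact h2
    · funext i
      show t i = sVal (decide (t i = -Real.sqrt (2/5)))
      rcases h1 i with h | h
      · have hne : ¬ (t i = -Real.sqrt (2/5)) := by rw [h]; exact rne
        rw [decide_eq_false hne, sValF]; exact h
      · rw [decide_eq_true h, sValT]; exact h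
  · rintro ⟨b, hb, rfl⟩
    refine ⟨fun i => ?_, ?_⟩
    · show sVal (b i) = Real.sqrt (2/5) ∨ sVal (b i) = -Real.sqrt (2/5)
      rcases Bool.eq_false_or_eq_true (b i) with hbi | hbi
      · rw [hbi, sValT]; exact Or.inr rfl
      · rw [hbi, sValF]; exact Or.inl rfl
    · have : (univ.filter fun i => sVal (b i) = -Real.sqrt (2/5)) =
          (univ.filter fun i => b i = true) := by
        apply Finset.filter_congr; intro i _
        rcases Bool.eq_false_or_eq_true (b i) with hbi | hbi <;> rw [hbi]
        · rw [sValT]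
          exact iff_of_true rfl rfl
        · rw [sValF]
          exact iff_of_false rne (by simp)
      rw [this]; exact hb

lemma sodd_iff (t : Fin 5 → ℝ) : t ∈ Sodd ↔ ∃ b : Fin 5 → Bool,
    Odd ((univ.filter fun i => b i = true).card) ∧ t = fun i => sVal (b i) := by
  constructor
  · rintro ⟨h1, h2⟩
    refine ⟨fun i => decide (t i = -Real.sqrt (2/5)), ?_, ?_⟩
    · have : (univ.filter fun i => decide (t i = -Real.sqrt (2/5)) = true) =
          (univ.filter fun i => t i = -Real.sqrt (2/5)) := by
        apply Finset.filter_congr; intro i _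
        exact decide_eq_true_iff
      rw [this]; exact h2
    · funext i
      show t i = sVal (decide (t i = -Real.sqrt (2/5)))
      rcases h1 i with h | h
      · have hne : ¬ (t i = -Real.sqrt (2/5)) := by rw [h]; exact rne
        rw [decide_eq_false hne, sValF]; exact h
      · rw [decide_eq_true h, sValT]; exact h
  · rintro ⟨b, hb, rfl⟩
    refine ⟨fun i => ?_, ?_⟩
    · show sVal (b i) = Real.sqrt (2/5) ∨ sVal (b i) = -Real.sqrt (2/5)
      rcases Bool.eq_false_or_eq_true (b i) with hbi | hbi
      · rw [hbi, sValT]; exact Or.inr rfl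
      · rw [hbi, sValF]; exact Or.inl rfl
    · have : (univ.filter fun i => sVal (b i) = -Real.sqrt (2/5)) =
          (univ.filter fun i => b i = true) := by
        apply Finset.filter_congr; intro i _
        rcases Bool.eq_false_or_eq_true (b i) with hbi | hbi <;> rw [hbi]
        · rw [sValT]
          exact iff_of_true rfl rfl
        · rw [sValF]
          exact iff_of_false rne (by simp)
      rw [this]; exact hb

lemma d5_iff (t : Fin 5 → ℝ) : t ∈ D5 ↔ ∃ a : Fin 5 → Fin 3,
    ((univ.filter fun i => a i ≠ 1).card = 2) ∧ t = fun i => eV (a i) := by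
  constructor
  · rintro ⟨h1, h2⟩
    refine ⟨fun i => if t i = -1 then 0 else if t i = 1 then 2 else 1, ?_, ?_⟩
    · have : (univ.filter fun i =>
          (if t i = -1 then (0 : Fin 3) else if t i = 1 then 2 else 1) ≠ 1) =
          (univ.filter fun i => t i ≠ 0) := by
        apply Finset.filter_congr; intro i _
        rcases h1 i with h | h | h
        · rw [if_pos h]
          exact iff_of_true (by decide) (by rw [h]; norm_num)
        · rw [if_neg (by rw [h]; norm_num), if_neg (by rw [h]; norm_num)]
          exact iff_of_false (by simp) (by rw [h]; simp)
        · rw [if_neg (by rw [h]; norm_num), if_pos h]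
          exact iff_of_true (by decide) (by rw [h]; norm_num)
      rw [this]; exact h2
    · funext i
      show t i = eV (if t i = -1 then 0 else if t i = 1 then 2 else 1)
      rcases h1 i with h | h | h
      · rw [if_pos h, eV0]; exact h
      · rw [if_neg (by rw [h]; norm_num), if_neg (by rw [h]; norm_num), eV1]; exact h
      · rw [if_neg (by rw [h]; norm_num), if_pos h, eV2]; exact h
  · rintro ⟨a, ha, rfl⟩
    refine ⟨fun i => ?_, ?_⟩
    · show eV (a i) = -1 ∨ eV (a i) = 0 ∨ eV (a i) = 1
      rcases k3 (a i) with h | h | h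
      · rw [h, eV0]; exact Or.inl rfl
      · rw [h, eV1]; exact Or.inr (Or.inl rfl)
      · rw [h, eV2]; exact Or.inr (Or.inr rfl)
    · have : (univ.filter fun i => eV (a i) ≠ 0) = (univ.filter fun i => a i ≠ 1) := by
        apply Finset.filter_congr; intro i _
        rcases k3 (a i) with h | h | h <;> rw [h]
        · rw [eV0]; exact iff_of_true (by norm_num) (by decide)
        · rw [eV1]; exact iff_of_false (by simp) (by simp)
        · rw [eV2]; exact iff_of_true (by norm_num) (by decide)
      rw [this]; exact ha

lemma snoc_inj {f g : Fin 5 → ℝ} {h h' : ℝ}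
    (H : (Fin.snoc f h : Fin 6 → ℝ) = Fin.snoc g h') : f = g ∧ h = h' := by
  constructor
  · funext i
    have := congrFun H (Fin.castSucc i)
    simpa using this
  · have := congrFun H (Fin.last 5)
    simpa only [Fin.snoc_last] using this

/-- Parametrization maps. -/
noncomputable def ΦS (h : ℝ) (b : Fin 5 → Bool) : Fin 6 → ℝ :=
  Fin.snoc (fun i => Real.sqrt (5/8) * sVal (b i)) h

noncomputable def ΦD (a : Fin 5 → Fin 3) : Fin 6 → ℝ :=
  Fin.snoc (fun i => 1 * eV (a i)) 0

lemma ΦS_inj (h : ℝ) : Function.Injective (ΦS h) := by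
  intro b b' H
  obtain ⟨hf, -⟩ := snoc_inj H
  funext i
  have := congrFun hf i
  exact sVal_inj (mul_left_cancel₀ (ne_of_gt cpos) this)

lemma ΦD_inj : Function.Injective ΦD := by
  intro a a' H
  obtain ⟨hf, -⟩ := snoc_inj H
  funext i
  have := congrFun hf i
  simp only [one_mul] at this
  exact eV_inj this

lemma layerE_eq : layer (Real.sqrt (5/8)) Seven (-(Real.sqrt 3 / 2)) =
    ΦS (-(Real.sqrt 3 / 2)) '' {b | Even ((univ.filter fun i => b i = true).card)} := by
  ext v
  simp only [layer, Set.mem_image, Set.mem_setOf_eq]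
  constructor
  · rintro ⟨t, ht, rfl⟩
    obtain ⟨b, hb, rfl⟩ := (seven_iff t).1 ht
    exact ⟨b, hb, rfl⟩
  · rintro ⟨b, hb, rfl⟩
    exact ⟨_, (seven_iff _).2 ⟨b, hb, rfl⟩, rfl⟩

lemma layerO_eq : layer (Real.sqrt (5/8)) Sodd (Real.sqrt 3 / 2) =
    ΦS (Real.sqrt 3 / 2) '' {b | Odd ((univ.filter fun i => b i = true).card)} := by
  ext v
  simp only [layer, Set.mem_image, Set.mem_setOf_eq]
  constructor
  · rintro ⟨t, ht, rfl⟩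
    obtain ⟨b, hb, rfl⟩ := (sodd_iff t).1 ht
    exact ⟨b, hb, rfl⟩
  · rintro ⟨b, hb, rfl⟩
    exact ⟨_, (sodd_iff _).2 ⟨b, hb, rfl⟩, rfl⟩

lemma layerD_eq : layer 1 D5 0 =
    ΦD '' {a | (univ.filter fun i => a i ≠ 1).card = 2} := by
  ext v
  simp only [layer, Set.mem_image, Set.mem_setOf_eq]
  constructor
  · rintro ⟨t, ht, rfl⟩
    obtain ⟨a, ha, rfl⟩ := (d5_iff t).1 ht
    exact ⟨a, ha, rfl⟩
  · rintro ⟨a, ha, rfl⟩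
    exact ⟨_, (d5_iff _).2 ⟨a, ha, rfl⟩, rfl⟩

lemma sum6 (f g : Fin 5 → ℝ) (h h' : ℝ) :
    ∑ i : Fin 6, (Fin.snoc f h : Fin 6 → ℝ) i * (Fin.snoc g h' : Fin 6 → ℝ) i =
      (∑ i : Fin 5, f i * g i) + h * h' := by
  rw [Fin.sum_univ_castSucc]
  simp only [Fin.snoc_castSucc, Fin.snoc_last]

lemma sum_SS (b b' : Fin 5 → Bool) :
    ∑ i : Fin 5, (Real.sqrt (5/8) * sVal (b i)) * (Real.sqrt (5/8) * sVal (b' i)) =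
      ((∑ i, sz (b i) * sz (b' i) : ℤ) : ℝ) / 4 := by
  have key : ∀ i : Fin 5, (Real.sqrt (5/8) * sVal (b i)) * (Real.sqrt (5/8) * sVal (b' i)) =
      ((sz (b i) * sz (b' i) : ℤ) : ℝ) / 4 := by
    intro i
    simp only [sVal]
    calc Real.sqrt (5/8) * (((sz (b i) : ℤ) : ℝ) * Real.sqrt (2/5)) *
          (Real.sqrt (5/8) * (((sz (b' i) : ℤ) : ℝ) * Real.sqrt (2/5)))
        = ((sz (b i) : ℤ) : ℝ) * ((sz (b' i) : ℤ) : ℝ) *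
          ((Real.sqrt (5/8) * Real.sqrt (5/8)) * (Real.sqrt (2/5) * Real.sqrt (2/5))) := by ring
      _ = ((sz (b i) * sz (b' i) : ℤ) : ℝ) / 4 := by rw [hc, hr]; push_cast; ring
  rw [Finset.sum_congr rfl fun i _ => key i]
  push_cast
  rw [← Finset.sum_div]

lemma sum_SD (b : Fin 5 → Bool) (a : Fin 5 → Fin 3) :
    ∑ i : Fin 5, (Real.sqrt (5/8) * sVal (b i)) * (1 * eV (a i)) =
      ((∑ i, sz (b i) * ez (a i) : ℤ) : ℝ) / 2 := by
  have key : ∀ i : Fin 5, (Real.sqrt (5/8) * sVal (b i)) * (1 * eV (a i)) =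
      ((sz (b i) * ez (a i) : ℤ) : ℝ) / 2 := by
    intro i
    simp only [sVal, eV, one_mul]
    calc Real.sqrt (5/8) * (((sz (b i) : ℤ) : ℝ) * Real.sqrt (2/5)) * ((ez (a i) : ℤ) : ℝ)
        = ((sz (b i) : ℤ) : ℝ) * ((ez (a i) : ℤ) : ℝ) *
          (Real.sqrt (5/8) * Real.sqrt (2/5)) := by ring
      _ = ((sz (b i) * ez (a i) : ℤ) : ℝ) / 2 := by rw [hcr]; push_cast; ring
  rw [Finset.sum_congr rfl fun i _ => key i]
  push_cast
  rw [← Finset.sum_div]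

lemma sum_DD (a a' : Fin 5 → Fin 3) :
    ∑ i : Fin 5, (1 * eV (a i)) * (1 * eV (a' i)) =
      ((∑ i, ez (a i) * ez (a' i) : ℤ) : ℝ) := by
  simp only [one_mul, eV]
  push_cast
  rfl

lemma sq34 : (Real.sqrt 3 / 2) * (Real.sqrt 3 / 2) = 3 / 4 := by
  rw [div_mul_div_comm, h3]; norm_num

end E6Aux

open E6Aux Finset in
theorem stmt14 :
    Set.ncard E6' = 72 ∧
    (∀ v ∈ E6', ∑ i, v i * v i = 2) ∧
    (∀ u ∈ E6', ∀ v ∈ E6', u ≠ v → ∑ i, u i * v i ≤ 1) := by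
  have hE : E6' =
      ΦS (-(Real.sqrt 3 / 2)) '' {b | Even ((univ.filter fun i => b i = true).card)} ∪
      ΦD '' {a | (univ.filter fun i => a i ≠ 1).card = 2} ∪
      ΦS (Real.sqrt 3 / 2) '' {b | Odd ((univ.filter fun i => b i = true).card)} := by
    rw [E6', layerE_eq, layerD_eq, layerO_eq]
  have lastS : ∀ (h : ℝ) (b : Fin 5 → Bool), ΦS h b (Fin.last 5) = h := by
    intro h b; rw [ΦS, Fin.snoc_last]
  have lastD : ∀ a : Fin 5 → Fin 3, ΦD a (Fin.last 5) = 0 := by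
    intro a; rw [ΦD, Fin.snoc_last]
  have h34 : (Real.sqrt 3 / 2) * (Real.sqrt 3 / 2) = 3 / 4 := sq34
  have hs3 := s3pos
  refine ⟨?_, ?_, ?_⟩
  · -- cardinality
    have d1 : Disjoint
        (ΦS (-(Real.sqrt 3 / 2)) '' {b | Even ((univ.filter fun i => b i = true).card)})
        (ΦD '' {a | (univ.filter fun i => a i ≠ 1).card = 2}) := by
      rw [Set.disjoint_left]
      rintro x ⟨b, -, rfl⟩ ⟨a, -, hxa⟩
      have := congrFun hxa (Fin.last 5)
      rw [lastD, lastS] at this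
      linarith
    have d2 : Disjoint
        (ΦS (-(Real.sqrt 3 / 2)) '' {b | Even ((univ.filter fun i => b i = true).card)})
        (ΦS (Real.sqrt 3 / 2) '' {b | Odd ((univ.filter fun i => b i = true).card)}) := by
      rw [Set.disjoint_left]
      rintro x ⟨b, -, rfl⟩ ⟨b', -, hxa⟩
      have := congrFun hxa (Fin.last 5)
      rw [lastS, lastS] at this
      linarith
    have d3 : Disjoint
        (ΦD '' {a | (univ.filter fun i => a i ≠ 1).card = 2})
        (ΦS (Real.sqrt 3 / 2) '' {b | Odd ((univ.filter fun i => b i = true).card)}) := by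
      rw [Set.disjoint_left]
      rintro x ⟨a, -, rfl⟩ ⟨b, -, hxa⟩
      have := congrFun hxa (Fin.last 5)
      rw [lastS, lastD] at this
      linarith
    have fE : (ΦS (-(Real.sqrt 3 / 2)) ''
        {b | Even ((univ.filter fun i => b i = true).card)}).Finite :=
      (Set.toFinite _).image _
    have fD : (ΦD '' {a | (univ.filter fun i => a i ≠ 1).card = 2}).Finite :=
      (Set.toFinite _).image _
    have fO : (ΦS (Real.sqrt 3 / 2) ''
        {b | Odd ((univ.filter fun i => b i = true).card)}).Finite :=
      (Set.toFinite _).image _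
    rw [hE, Set.ncard_union_eq (Set.disjoint_union_left.mpr ⟨d2, d3⟩) (fE.union fD) fO,
      Set.ncard_union_eq d1 fE fD,
      Set.ncard_image_of_injective _ (ΦS_inj _),
      Set.ncard_image_of_injective _ ΦD_inj,
      Set.ncard_image_of_injective _ (ΦS_inj _)]
    have e1 : {b : Fin 5 → Bool | Even ((univ.filter fun i => b i = true).card)} =
        ↑(univ.filter fun b : Fin 5 → Bool => Even ((univ.filter fun i => b i = true).card)) := by
      ext b; simp
    have e2 : {a : Fin 5 → Fin 3 | (univ.filter fun i => a i ≠ 1).card = 2} =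
        ↑(univ.filter fun a : Fin 5 → Fin 3 => (univ.filter fun i => a i ≠ 1).card = 2) := by
      ext a; simp
    have e3 : {b : Fin 5 → Bool | Odd ((univ.filter fun i => b i = true).card)} =
        ↑(univ.filter fun b : Fin 5 → Bool => Odd ((univ.filter fun i => b i = true).card)) := by
      ext b; simp
    rw [e1, e2, e3, Set.ncard_coe_finset, Set.ncard_coe_finset, Set.ncard_coe_finset,
      cardE, cardO, cardD]
  · -- norms
    intro v hv
    rw [hE] at hv
    rcases hv with (⟨b, -, rfl⟩ | ⟨a, ha, rfl⟩) | ⟨b, -, rfl⟩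
    · simp only [ΦS]
      rw [sum6, sum_SS, show (∑ i, sz (b i) * sz (b i)) = 5 from by
        rw [Finset.sum_congr rfl fun i _ => show sz (b i) * sz (b i) = 1 from by
          cases b i <;> rfl]
        simp]
      rw [neg_mul_neg, h34]; norm_num
    · simp only [ΦD]
      rw [sum6, sum_DD, keyDnorm a ha]; norm_num
    · simp only [ΦS]
      rw [sum6, sum_SS, show (∑ i, sz (b i) * sz (b i)) = 5 from by
        rw [Finset.sum_congr rfl fun i _ => show sz (b i) * sz (b i) = 1 from by
          cases b i <;> rfl]
        simp]
      rw [h34]; norm_num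
  · -- inner products
    intro u hu v hv huv
    rw [hE] at hu hv
    rcases hu with (⟨b, hb, rfl⟩ | ⟨a, ha, rfl⟩) | ⟨b, hb, rfl⟩ <;>
      rcases hv with (⟨b', hb', rfl⟩ | ⟨a', ha', rfl⟩) | ⟨b', hb', rfl⟩
    · -- E E
      have hne : b ≠ b' := fun h => huv (by rw [h])
      have hZ : ((∑ i, sz (b i) * sz (b' i) : ℤ) : ℝ) ≤ 1 := by
        exact_mod_cast keyEE b b' hb hb' hne
      simp only [ΦS]
      rw [sum6, sum_SS, neg_mul_neg, h34]
      linarith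
    · -- E D
      have hZ : ((∑ i, sz (b i) * ez (a' i) : ℤ) : ℝ) ≤ 2 := by
        exact_mod_cast keyED b a' ha'
      simp only [ΦS, ΦD]
      rw [sum6, sum_SD, mul_zero]
      linarith
    · -- E O
      have hZ : ((∑ i, sz (b i) * sz (b' i) : ℤ) : ℝ) ≤ 5 := by
        exact_mod_cast keySS b b'
      simp only [ΦS]
      rw [sum6, sum_SS, neg_mul, h34]
      linarith
    · -- D E
      rw [show (∑ i, ΦD a i * ΦS (-(Real.sqrt 3 / 2)) b' i) =
          ∑ i, ΦS (-(Real.sqrt 3 / 2)) b' i * ΦD a i from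
        Finset.sum_congr rfl fun i _ => mul_comm _ _]
      have hZ : ((∑ i, sz (b' i) * ez (a i) : ℤ) : ℝ) ≤ 2 := by
        exact_mod_cast keyED b' a ha
      simp only [ΦS, ΦD]
      rw [sum6, sum_SD, mul_zero]
      linarith
    · -- D D
      have hne : a ≠ a' := fun h => huv (by rw [h])
      have hZ : ((∑ i, ez (a i) * ez (a' i) : ℤ) : ℝ) ≤ 1 := by
        exact_mod_cast keyDD a a' ha ha' hne
      simp only [ΦD]
      rw [sum6, sum_DD, mul_zero]
      linarith
    · -- D O
      rw [show (∑ i, ΦD a i * ΦS (Real.sqrt 3 / 2) b' i) =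
          ∑ i, ΦS (Real.sqrt 3 / 2) b' i * ΦD a i from
        Finset.sum_congr rfl fun i _ => mul_comm _ _]
      have hZ : ((∑ i, sz (b' i) * ez (a i) : ℤ) : ℝ) ≤ 2 := by
        exact_mod_cast keyED b' a ha
      simp only [ΦS, ΦD]
      rw [sum6, sum_SD, mul_zero]
      linarith
    · -- O E
      rw [show (∑ i, ΦS (Real.sqrt 3 / 2) b i * ΦS (-(Real.sqrt 3 / 2)) b' i) =
          ∑ i, ΦS (-(Real.sqrt 3 / 2)) b' i * ΦS (Real.sqrt 3 / 2) b i from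
        Finset.sum_congr rfl fun i _ => mul_comm _ _]
      have hZ : ((∑ i, sz (b' i) * sz (b i) : ℤ) : ℝ) ≤ 5 := by
        exact_mod_cast keySS b' b
      simp only [ΦS]
      rw [sum6, sum_SS, neg_mul, h34]
      linarith
    · -- O D
      have hZ : ((∑ i, sz (b i) * ez (a' i) : ℤ) : ℝ) ≤ 2 := by
        exact_mod_cast keyED b a' ha'
      simp only [ΦS, ΦD]
      rw [sum6, sum_SD, mul_zero]
      linarith
    · -- O O
      have hne : b ≠ b' := fun h => huv (by rw [h])
      have hZ : ((∑ i, sz (b i) * sz (b' i) : ℤ) : ℝ) ≤ 1 := by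
        exact_mod_cast keyOO b b' hb hb' hne
      simp only [ΦS]
      rw [sum6, sum_SS, h34]
      linarith
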